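/- Let K be a convex body in ℝ^n in Behrend position and let 1 ≤ i ≤ n−1. Then for every i-dimensional linear subspace L of ℝ^n, there exists a diametrical direction w ∈ D_K such that ∠(L, w) ≥ arccos(√(i/n)). -/

import Mathlib

open MeasureTheory Metric Set Pointwise
open scoped RealInnerProductSpace

/-- A convex body: a compact convex set with nonempty interior. -/
def IsConvexBody {n : ℕ} (K : Set (EuclideanSpace ℝ (Fin n))) : Prop :=
  IsCompact K ∧ Convex ℝ K ∧ (interior K).Nonempty

/-- The isodiametric quotient `iq(K) = vol(K) / D(K)^n`. -/
noncomputable def iq {n : ℕ} (K : Set (EuclideanSpace ℝ (Fin n))) : ℝ :=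
  (volume K).toReal / Metric.diam K ^ n

/-- `K` is in Behrend position if `iq(K)` is maximal among invertible linear images of `K`. -/
def InBehrendPosition {n : ℕ} (K : Set (EuclideanSpace ℝ (Fin n))) : Prop :=
  ∀ A : EuclideanSpace ℝ (Fin n) ≃ₗ[ℝ] EuclideanSpace ℝ (Fin n), iq (A '' K) ≤ iq K

/-- The set of diametrical directions of `K`: unit vectors `u` such that some segment
`x + D(K)·[0,u]` is contained in `K`. -/
def diamDirs {n : ℕ} (K : Set (EuclideanSpace ℝ (Fin n))) :
    Set (EuclideanSpace ℝ (Fin n)) :=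
  {u | ‖u‖ = 1 ∧ ∃ x ∈ K, ∀ t ∈ Icc (0:ℝ) 1, x + (t * Metric.diam K) • u ∈ K}

/-- The angle between a linear subspace `L` and a vector `v`:
`∠(L,v) = inf { arccos(⟨z,v⟩/(‖z‖·‖v‖)) : z ∈ L, z ≠ 0 }`. -/
noncomputable def subspaceAngle {n : ℕ} (L : Submodule ℝ (EuclideanSpace ℝ (Fin n)))
    (v : EuclideanSpace ℝ (Fin n)) : ℝ :=
  sInf {θ | ∃ z ∈ L, z ≠ 0 ∧ θ = Real.arccos (⟪z, v⟫ / (‖z‖ * ‖v‖))}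

/-! ### Auxiliary definitions and lemmas -/

/-- The orthogonal projection onto `Lᗮ`, as an endomorphism of the ambient space. -/
noncomputable def projO {n : ℕ} (L : Submodule ℝ (EuclideanSpace ℝ (Fin n))) :
    EuclideanSpace ℝ (Fin n) →ₗ[ℝ] EuclideanSpace ℝ (Fin n) :=
  Lᗮ.subtype ∘ₗ (Submodule.orthogonalProjectionOnto Lᗮ).toLinearMap

/-- The perturbation map `id + ε·P_{Lᗮ}`. -/
noncomputable def pert {n : ℕ} (L : Submodule ℝ (EuclideanSpace ℝ (Fin n))) (ε : ℝ) :
    EuclideanSpace ℝ (Fin n) →ₗ[ℝ] EuclideanSpace ℝ (Fin n) :=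
  LinearMap.id + ε • projO L

lemma pert_mem_L {n : ℕ} (L : Submodule ℝ (EuclideanSpace ℝ (Fin n))) (ε : ℝ)
    {x : EuclideanSpace ℝ (Fin n)} (hx : x ∈ L) : pert L ε x = x := by
  simp [pert, projO, Submodule.orthogonalProjectionOnto_apply_of_mem_orthogonal
    (L.le_orthogonal_orthogonal hx)]

lemma pert_mem_orth {n : ℕ} (L : Submodule ℝ (EuclideanSpace ℝ (Fin n))) (ε : ℝ)
    {x : EuclideanSpace ℝ (Fin n)} (hx : x ∈ Lᗮ) : pert L ε x = (1+ε) • x := by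
  have : (Submodule.orthogonalProjectionOnto Lᗮ x : EuclideanSpace ℝ (Fin n)) = x :=
    Submodule.starProjection_eq_self_iff.2 hx
  simp [pert, projO, this, add_smul, one_smul]

lemma det_pert {n i : ℕ} (L : Submodule ℝ (EuclideanSpace ℝ (Fin n)))
    (hL : Module.finrank ℝ L = i) (ε : ℝ) :
    LinearMap.det (pert L ε) = (1+ε)^(n-i) := by
  classical
  let b₁ := Module.finBasis ℝ L
  let b₂ := Module.finBasis ℝ ↥Lᗮ
  let e := Submodule.prodEquivOfIsCompl L Lᗮ L.isCompl_orthogonal_of_hasOrthogonalProjection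
  let b := (b₁.prod b₂).map e
  have hb1 : ∀ j, b (Sum.inl j) = (b₁ j : EuclideanSpace ℝ (Fin n)) := by
    intro j; simp [b, e, Module.Basis.prod_apply, Submodule.coe_prodEquivOfIsCompl']
  have hb2 : ∀ j, b (Sum.inr j) = (b₂ j : EuclideanSpace ℝ (Fin n)) := by
    intro j; simp [b, e, Module.Basis.prod_apply, Submodule.coe_prodEquivOfIsCompl']
  have hmat : LinearMap.toMatrix b b (pert L ε) =
      Matrix.diagonal (Sum.elim (fun _ => (1:ℝ)) (fun _ => 1+ε)) := by
    ext j k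
    rcases k with k | k
    · rw [LinearMap.toMatrix_apply, hb1, pert_mem_L L ε (b₁ k).2]
      rcases j with j | j <;>
        simp [Matrix.diagonal, ← hb1, Module.Basis.repr_self, Finsupp.single_apply, eq_comm]
    · rw [LinearMap.toMatrix_apply, hb2, pert_mem_orth L ε (b₂ k).2]
      rcases j with j | j <;>
        simp [Matrix.diagonal, ← hb2, Module.Basis.repr_self, Finsupp.single_apply, eq_comm,
          ite_add_ite]
  have hdet : LinearMap.det (pert L ε) =
      ((1:ℝ))^(Module.finrank ℝ L) * (1+ε)^(Module.finrank ℝ ↥Lᗮ) := by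
    rw [← LinearMap.det_toMatrix b, hmat, Matrix.det_diagonal]
    simp [Fintype.prod_sum_type]
  rw [hdet]
  have h1 : Module.finrank ℝ ↥Lᗮ = n - i := by
    have h2 := Submodule.finrank_add_finrank_orthogonal (K := L)
    rw [hL, finrank_euclideanSpace_fin] at h2
    omega
  rw [h1, hL]; ring

lemma norm_pert_sq {n : ℕ} (L : Submodule ℝ (EuclideanSpace ℝ (Fin n))) (ε : ℝ)
    (v : EuclideanSpace ℝ (Fin n)) :
    ‖pert L ε v‖^2 = ‖v‖^2 + (2*ε+ε^2) * ‖projO L v‖^2 := by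
  set vO : EuclideanSpace ℝ (Fin n) := projO L v with hvO
  set vL : EuclideanSpace ℝ (Fin n) := (Submodule.orthogonalProjectionOnto L v : EuclideanSpace ℝ (Fin n))
    with hvL
  have hsum : vL + vO = v := Submodule.starProjection_add_starProjection_orthogonal (K := L) v
  have hOmem : vO ∈ Lᗮ := (Submodule.orthogonalProjectionOnto Lᗮ v).2
  have hLmem : vL ∈ L := (Submodule.orthogonalProjectionOnto L v).2
  have hinner : ∀ c : ℝ, ⟪vL, c • vO⟫ = 0 := by
    intro c
    rw [inner_smul_right]
    rw [Submodule.inner_right_of_mem_orthogonal hLmem hOmem]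
    ring
  have hp : pert L ε v = vL + (1+ε) • vO := by
    simp only [pert, LinearMap.add_apply, LinearMap.id_apply, LinearMap.smul_apply, ← hvO]
    rw [← hsum]; module
  have pyth : ∀ c : ℝ, ‖vL + c • vO‖^2 = ‖vL‖^2 + c^2 * ‖vO‖^2 := by
    intro c
    have h := norm_add_sq_eq_norm_sq_add_norm_sq_of_inner_eq_zero _ _ (hinner c)
    rw [norm_smul, Real.norm_eq_abs] at h
    have habs : |c| * |c| = c^2 := by rw [abs_mul_abs_self]; ring
    nlinarith [h, habs]
  have h1 : ‖v‖^2 = ‖vL‖^2 + ‖vO‖^2 := by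
    have := pyth 1; rw [one_smul, hsum] at this; simpa using this
  rw [hp, pyth, h1]; ring

lemma norm_proj_sq_add {n : ℕ} (L : Submodule ℝ (EuclideanSpace ℝ (Fin n)))
    (v : EuclideanSpace ℝ (Fin n)) :
    ‖(Submodule.orthogonalProjectionOnto L v : EuclideanSpace ℝ (Fin n))‖^2 + ‖projO L v‖^2 = ‖v‖^2 := by
  have := Submodule.norm_sq_eq_add_norm_sq_projection v L
  simpa [projO] using this.symm

lemma arccos_antitone : Antitone Real.arccos := by
  intro a b hab
  unfold Real.arccos
  have := Real.monotone_arcsin hab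
  linarith

lemma proj_sq_lt {n i : ℕ} (L : Submodule ℝ (EuclideanSpace ℝ (Fin n)))
    (hL : Module.finrank ℝ L = i) (hi1 : 1 ≤ i)
    (u : EuclideanSpace ℝ (Fin n)) (hu : ‖u‖ = 1)
    (h : subspaceAngle L u < Real.arccos (Real.sqrt ((i:ℝ)/n))) :
    (i:ℝ)/n < ‖(Submodule.orthogonalProjectionOnto L u : EuclideanSpace ℝ (Fin n))‖^2 := by
  have hne : ∃ z ∈ L, z ≠ (0 : EuclideanSpace ℝ (Fin n)) := by
    rw [← Submodule.ne_bot_iff]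
    intro hbot
    rw [hbot] at hL
    simp at hL; omega
  obtain ⟨z₀, hz₀L, hz₀⟩ := hne
  set S := {θ | ∃ z ∈ L, z ≠ 0 ∧ θ = Real.arccos (⟪z, u⟫ / (‖z‖ * ‖u‖))} with hS
  have hSne : S.Nonempty := ⟨_, z₀, hz₀L, hz₀, rfl⟩
  have hSbdd : BddBelow S := by
    refine ⟨0, ?_⟩
    rintro θ ⟨z, _, _, rfl⟩
    exact Real.arccos_nonneg _
  rw [subspaceAngle, ← hS] at h
  obtain ⟨θ, ⟨z, hzL, hz, rfl⟩, hθ⟩ := (csInf_lt_iff hSbdd hSne).1 h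
  have hlt : Real.sqrt ((i:ℝ)/n) < ⟪z, u⟫ / (‖z‖ * ‖u‖) := by
    by_contra hc
    push_neg at hc
    exact absurd (arccos_antitone hc) (not_le.2 hθ)
  rw [hu, mul_one] at hlt
  have hzn : (0:ℝ) < ‖z‖ := norm_pos_iff.2 hz
  have hinner : ⟪z, u⟫ = ⟪z, (Submodule.orthogonalProjectionOnto L u : EuclideanSpace ℝ (Fin n))⟫ := by
    have hdec : (Submodule.orthogonalProjectionOnto L u : EuclideanSpace ℝ (Fin n)) +
        (Submodule.orthogonalProjectionOnto Lᗮ u : EuclideanSpace ℝ (Fin n)) = u :=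
      Submodule.starProjection_add_starProjection_orthogonal (K := L) u
    have h0 : ⟪z, (Submodule.orthogonalProjectionOnto Lᗮ u : EuclideanSpace ℝ (Fin n))⟫ = 0 :=
      Submodule.inner_right_of_mem_orthogonal hzL (Submodule.orthogonalProjectionOnto Lᗮ u).2
    conv_lhs => rw [← hdec]
    rw [inner_add_right, h0, add_zero]
  have hCS : ⟪z, u⟫ ≤ ‖z‖ * ‖(Submodule.orthogonalProjectionOnto L u : EuclideanSpace ℝ (Fin n))‖ := by
    rw [hinner]
    exact real_inner_le_norm _ _
  have hple : ⟪z, u⟫ / ‖z‖ ≤ ‖(Submodule.orthogonalProjectionOnto L u : EuclideanSpace ℝ (Fin n))‖ := by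
    rw [div_le_iff₀ hzn]; linarith [hCS]
  have hsq : Real.sqrt ((i:ℝ)/n) < ‖(Submodule.orthogonalProjectionOnto L u : EuclideanSpace ℝ (Fin n))‖ :=
    lt_of_lt_of_le hlt hple
  have hnn : (0:ℝ) ≤ (i:ℝ)/n := by positivity
  calc (i:ℝ)/n = Real.sqrt ((i:ℝ)/n)^2 := (Real.sq_sqrt hnn).symm
    _ < _ := by
        apply pow_lt_pow_left₀ hsq (Real.sqrt_nonneg _)
        norm_num

lemma pow_one_add_le (m : ℕ) {a : ℝ} (h0 : 0 ≤ a) (h1 : a ≤ 1) :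
    (1+a)^m ≤ 1 + m*a + m*2^m*a^2 := by
  induction m with
  | zero => norm_num
  | succ m ih =>
    have h2 : (1+a)^(m+1) = (1+a)^m * (1+a) := by ring
    have hb : (0:ℝ) ≤ 1 + m*a + m*2^m*a^2 := by positivity
    have h3 : (1+a)^m * (1+a) ≤ (1 + m*a + m*2^m*a^2) * (1+a) :=
      mul_le_mul_of_nonneg_right ih (by linarith)
    rw [h2]
    refine h3.trans ?_
    have ha2 : a^2 ≤ a := by nlinarith
    have ha3 : a^3 ≤ a^2 := by nlinarith
    have hm : (0:ℝ) ≤ m := Nat.cast_nonneg m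
    have hp : (0:ℝ) ≤ (2:ℝ)^m := by positivity
    push_cast
    have k1 : (m:ℝ)*2^m*a^3 ≤ (m:ℝ)*2^m*a^2 :=
      mul_le_mul_of_nonneg_left ha3 (by positivity)
    have k2 : (m:ℝ)*a^2 ≤ (2:ℝ)^m*a^2 := by
      apply mul_le_mul_of_nonneg_right _ (sq_nonneg a)
      exact_mod_cast (Nat.lt_two_pow_self (n := m)).le
    have e1 : (2:ℝ)^(m+1) = 2*2^m := by ring
    rw [e1]
    nlinarith [k1, k2, mul_nonneg hm hp, sq_nonneg a]

set_option maxHeartbeats 2000000 in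
/-- For a convex body in Behrend position and any `i`-dimensional linear subspace `L`
(with `1 ≤ i ≤ n-1`), some diametrical direction `w` satisfies
`∠(L,w) ≥ arccos(√(i/n))`. -/
theorem behrend_diamDirs_far_from_subspace {n : ℕ}
    (K : Set (EuclideanSpace ℝ (Fin n))) (hK : IsConvexBody K)
    (hB : InBehrendPosition K) (i : ℕ) (hi1 : 1 ≤ i) (hi2 : i ≤ n - 1)
    (L : Submodule ℝ (EuclideanSpace ℝ (Fin n))) (hL : Module.finrank ℝ L = i) :
    ∃ w ∈ diamDirs K, Real.arccos (Real.sqrt ((i : ℝ) / n)) ≤ subspaceAngle L w := by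
  classical
  obtain ⟨hKc, hconv, hint⟩ := hK
  by_contra hcon
  push_neg at hcon
  have hn2 : 2 ≤ n := by omega
  have hin : i ≤ n := by omega
  have hn0 : (0:ℝ) < n := by positivity
  set D := Metric.diam K with hDdef
  -- K has an interior ball, hence two distinct points
  obtain ⟨z, hzint⟩ := hint
  obtain ⟨ρ, hρ, hball⟩ := Metric.isOpen_iff.1 isOpen_interior z hzint
  have hzK : z ∈ K := interior_subset hzint
  set v₀ : EuclideanSpace ℝ (Fin n) := EuclideanSpace.single ⟨0, by omega⟩ (1:ℝ) with hv₀
  have hv₀n : ‖v₀‖ = 1 := by simp [hv₀]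
  have hz'K : z + (ρ/2) • v₀ ∈ K := by
    apply interior_subset
    apply hball
    rw [Metric.mem_ball, dist_eq_norm]
    simp only [add_sub_cancel_left]
    rw [norm_smul, hv₀n]
    rw [Real.norm_eq_abs, abs_of_pos (by linarith)]
    linarith
  have hD0 : 0 < D := by
    have h1 : dist (z + (ρ/2) • v₀) z ≤ D :=
      Metric.dist_le_diam_of_mem hKc.isBounded hz'K hzK
    have h2 : dist (z + (ρ/2) • v₀) z = ρ/2 := by
      rw [dist_eq_norm]
      simp only [add_sub_cancel_left]
      rw [norm_smul, hv₀n, Real.norm_eq_abs, abs_of_pos (by linarith)]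
      ring
    linarith
  have hKne : K.Nonempty := ⟨z, hzK⟩
  have hKKc : IsCompact (K ×ˢ K) := hKc.prod hKc
  have hdistc : Continuous fun p : EuclideanSpace ℝ (Fin n) × EuclideanSpace ℝ (Fin n) =>
      dist p.1 p.2 := continuous_fst.dist continuous_snd
  -- the diameter is attained
  obtain ⟨⟨x₀, y₀⟩, hp₀, hmax₀⟩ := hKKc.exists_isMaxOn ⟨(z, z), Set.mk_mem_prod hzK hzK⟩
    hdistc.continuousOn
  have hx₀ : x₀ ∈ K := hp₀.1
  have hy₀ : y₀ ∈ K := hp₀.2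
  have hd₀ : dist x₀ y₀ = D := by
    apply le_antisymm (Metric.dist_le_diam_of_mem hKc.isBounded hx₀ hy₀)
    apply Metric.diam_le_of_forall_dist_le dist_nonneg
    intro x hx y hy
    have hmm := hmax₀ (Set.mk_mem_prod hx hy)
    simpa using hmm
  set q : ℝ := ((n - i : ℕ) : ℝ) / n with hqdef
  have hq1 : q ≤ 1 := by
    rw [hqdef, div_le_one hn0]
    exact_mod_cast Nat.sub_le n i
  have hq0 : 0 < q := by
    rw [hqdef]
    have : (1:ℝ) ≤ ((n - i : ℕ):ℝ) := by exact_mod_cast Nat.one_le_iff_ne_zero.2 (by omega)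
    positivity
  -- any diametral pair has small orthogonal component
  have key : ∀ x ∈ K, ∀ y ∈ K, dist x y = D → ‖projO L (x - y)‖^2 < q * D^2 := by
    intro x hx y hy hxy
    set u : EuclideanSpace ℝ (Fin n) := D⁻¹ • (x - y) with hu
    have hxyn : ‖x - y‖ = D := by rw [← dist_eq_norm, hxy]
    have hun : ‖u‖ = 1 := by
      rw [hu, norm_smul, Real.norm_eq_abs, abs_of_pos (by positivity), hxyn]
      field_simp
    have hmem : u ∈ diamDirs K := by
      refine ⟨hun, y, hy, ?_⟩
      intro t ht
      have heq : y + (t * D) • u = (1 - t) • y + t • x := by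
        rw [hu, smul_smul]
        have : t * D * D⁻¹ = t := by field_simp
        rw [this]
        module
      have hKg : y + (t * Metric.diam K) • u = (1 - t) • y + t • x := heq
      rw [hKg]
      exact hconv hy hx (by linarith [ht.2]) ht.1 (by ring)
    have hang := hcon u hmem
    have hilt := proj_sq_lt L hL hi1 u hun hang
    have hpyth := norm_proj_sq_add L u
    rw [hun] at hpyth
    have huproj : ‖projO L u‖^2 < q := by
      have hc : ((n - i : ℕ):ℝ) = (n:ℝ) - i := Nat.cast_sub hin
      have : q = 1 - (i:ℝ)/n := by
        rw [hqdef, hc]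
        field_simp
      rw [this]
      linarith only [hilt, hpyth]
    have hxyu : x - y = D • u := by
      rw [hu, smul_smul]
      have : D * D⁻¹ = 1 := by field_simp
      rw [this, one_smul]
    rw [hxyu, LinearMap.map_smul, norm_smul, Real.norm_eq_abs, abs_of_pos hD0, mul_pow]
    calc (D^2) * ‖projO L u‖^2 < D^2 * q := by
          apply mul_lt_mul_of_pos_left huproj (by positivity)
      _ = q * D^2 := by ring
  -- continuity of the projection functional
  have hgc : Continuous fun p : EuclideanSpace ℝ (Fin n) × EuclideanSpace ℝ (Fin n) =>
      ‖projO L (p.1 - p.2)‖^2 := by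
    have : Continuous (projO L) := (projO L).continuous_of_finiteDimensional
    exact ((this.comp (continuous_fst.sub continuous_snd)).norm).pow 2
  -- maximize the projection functional over diametral pairs
  set Pd := (K ×ˢ K) ∩ {p | dist p.1 p.2 = D} with hPd
  have hPdc : IsCompact Pd := hKKc.inter_right (isClosed_eq hdistc continuous_const)
  have hPdne : Pd.Nonempty := ⟨(x₀, y₀), Set.mk_mem_prod hx₀ hy₀, hd₀⟩
  obtain ⟨pβ, hpβ, hβmax⟩ := hPdc.exists_isMaxOn hPdne hgc.continuousOn
  set G0 : ℝ := ‖projO L (pβ.1 - pβ.2)‖^2 with hG0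
  have hG0lt : G0 < q * D^2 := key pβ.1 hpβ.1.1 pβ.2 hpβ.1.2 hpβ.2
  have hG0nn : 0 ≤ G0 := by positivity
  set G : ℝ := (G0 + q * D^2)/2 with hG
  have hGlt : G < q * D^2 := by rw [hG]; linarith
  have hGnn : 0 ≤ G := by rw [hG]; positivity
  have hPdG : ∀ p ∈ Pd, ‖projO L (p.1 - p.2)‖^2 < G := by
    intro p hp
    have hh : ‖projO L (p.1 - p.2)‖^2 ≤ G0 := by
      have := hβmax hp
      simpa [hG0] using this
    calc ‖projO L (p.1 - p.2)‖^2 ≤ G0 := hh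
      _ < G := by rw [hG]; linarith
  -- pairs with large orthogonal component have distance bounded away from D
  have hsplit : ∃ r : ℝ, 0 ≤ r ∧ r < D ∧
      ∀ x ∈ K, ∀ y ∈ K, ‖projO L (x - y)‖^2 ≤ G ∨ dist x y ≤ r := by
    set T := (K ×ˢ K) ∩ {p | G ≤ ‖projO L (p.1 - p.2)‖^2} with hT
    have hTc : IsCompact T := hKKc.inter_right (isClosed_le continuous_const hgc)
    rcases T.eq_empty_or_nonempty with hTe | hTne
    · refine ⟨0, le_refl 0, hD0, ?_⟩
      intro x hx y hy
      left
      by_contra hc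
      push_neg at hc
      have : ((x, y) : _ × _) ∈ T := ⟨Set.mk_mem_prod hx hy, le_of_lt hc⟩
      rw [hTe] at this
      exact this
    · obtain ⟨pr, hpr, hrmax⟩ := hTc.exists_isMaxOn hTne hdistc.continuousOn
      set r : ℝ := dist pr.1 pr.2 with hr
      have hrle : r ≤ D := Metric.dist_le_diam_of_mem hKc.isBounded hpr.1.1 hpr.1.2
      have hrne : r ≠ D := by
        intro hrD
        have hprPd : pr ∈ Pd := ⟨hpr.1, hrD⟩
        have h1 := hPdG pr hprPd
        have h2 := hpr.2
        simp only [Set.mem_setOf_eq] at h2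
        linarith
      refine ⟨r, dist_nonneg, lt_of_le_of_ne hrle hrne, ?_⟩
      intro x hx y hy
      by_cases hc : G ≤ ‖projO L (x - y)‖^2
      · right
        have hh := hrmax (⟨Set.mk_mem_prod hx hy, hc⟩ : ((x,y) : _ × _) ∈ T)
        simpa using hh
      · left
        push_neg at hc
        exact le_of_lt hc
  obtain ⟨r, hr0, hrD, hcase⟩ := hsplit
  -- normalized orthogonal bound
  set g' : ℝ := G / D^2 with hg'
  have hg'0 : 0 ≤ g' := by positivity
  have hg'q : g' < q := by
    rw [hg', div_lt_iff₀ (by positivity)]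
    linarith
  have hg'1 : g' ≤ 1 := by linarith
  have hGg : G = g' * D^2 := by rw [hg']; field_simp
  -- choose ε
  set ε : ℝ := min (1/3) (min ((D - r)/(2*D)) ((q - g')/(1 + 9*2^n))) with hε
  have hεa : ε ≤ 1/3 := min_le_left _ _
  have hεb : ε ≤ (D - r)/(2*D) := le_trans (min_le_right _ _) (min_le_left _ _)
  have hεc : ε ≤ (q - g')/(1 + 9*2^n) := le_trans (min_le_right _ _) (min_le_right _ _)
  have h2n : (0:ℝ) < 1 + 9*2^n := by positivity
  have hε0 : 0 < ε := by
    apply lt_min (by norm_num)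
    apply lt_min
    · apply div_pos (by linarith) (by linarith)
    · apply div_pos (by linarith) h2n
  have hε1 : ε ≤ 1 := by linarith
  -- the two squared-distance bounds
  set M1 : ℝ := D^2 + (2*ε+ε^2) * G with hM1
  set M2 : ℝ := ((1+ε)*r)^2 with hM2
  have hM1nn : 0 ≤ M1 := by rw [hM1]; positivity
  have hM2nn : 0 ≤ M2 := by rw [hM2]; positivity
  -- the key numeric inequality for M1
  have hN1 : M1^n < ((1+ε)^(n-i) * D^n)^2 := by
    have ha : (2*ε+ε^2)*g' ≤ 1 := by nlinarith only [hεa, hε0, hg'1, hg'0]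
    have ha0 : 0 ≤ (2*ε+ε^2)*g' := by positivity
    have hpow := pow_one_add_le n ha0 ha
    have hbern : 1 + (2*(n-i):ℕ) * ε ≤ (1+ε)^(2*(n-i)) :=
      one_add_mul_le_pow (by linarith) (2*(n-i))
    have hqn : ((n - i : ℕ):ℝ) = q * n := by
      rw [hqdef]; field_simp
    have hcast : ((2*(n-i):ℕ):ℝ) = 2 * (q * n) := by
      push_cast [hqn]; ring
    rw [hcast] at hbern
    -- core strict inequality
    have hcore : 1 + n*((2*ε+ε^2)*g') + n*2^n*((2*ε+ε^2)*g')^2 < 1 + 2*(q*n)*ε := by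
      have hnn1 : (1:ℝ) ≤ n := by exact_mod_cast (by omega : 1 ≤ n)
      have hA3 : (2*ε+ε^2)*g' ≤ 3*ε := by nlinarith only [hε0, hε1, hg'0, hg'1]
      have hsq : ((2*ε+ε^2)*g')^2 ≤ 9*ε^2 := by
        have h9 : ((2*ε+ε^2)*g')^2 ≤ (3*ε)^2 := by
          apply pow_le_pow_left₀ (by positivity) hA3
        nlinarith only [h9]
      have hεq : ε * (1 + 9*2^n) ≤ q - g' := by
        rwa [le_div_iff₀ h2n] at hεc
      have h2pn : (0:ℝ) ≤ (2:ℝ)^n := by positivity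
      -- divide the target by n*ε
      have hmain : (2+ε)*g' + 9*2^n*ε < 2*q := by
        have t1 : ε*g' ≤ ε := by nlinarith only [hε0, hg'0, hg'1]
        have t2 : ε*g' + 9*2^n*ε = ε*(g' + 9*2^n) := by ring
        have t3 : ε*(g' + 9*2^n) ≤ ε*(1 + 9*2^n) := by
          apply mul_le_mul_of_nonneg_left _ (le_of_lt hε0)
          linarith
        have t4 : ε*g' + 9*2^n*ε ≤ q - g' := by
          calc ε*g' + 9*2^n*ε = ε*(g' + 9*2^n) := t2
            _ ≤ ε*(1 + 9*2^n) := t3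
            _ ≤ q - g' := hεq
        linarith only [t4, hg'q]
      have hne : (0:ℝ) < n * ε := by positivity
      have c1 : (n:ℝ)*((2*ε+ε^2)*g') = (n*ε)*((2+ε)*g') := by ring
      have c2 : (n:ℝ)*2^n*((2*ε+ε^2)*g')^2 ≤ (n*ε)*(9*2^n*ε) := by
        calc (n:ℝ)*2^n*((2*ε+ε^2)*g')^2 ≤ (n:ℝ)*2^n*(9*ε^2) :=
              mul_le_mul_of_nonneg_left hsq (by positivity)
          _ = (n*ε)*(9*2^n*ε) := by ring
      have c3 : (n*ε)*((2+ε)*g') + (n*ε)*(9*2^n*ε) < (n*ε)*(2*q) := by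
        have hmul := mul_lt_mul_of_pos_left hmain hne
        calc (n*ε)*((2+ε)*g') + (n*ε)*(9*2^n*ε)
            = (n*ε)*((2+ε)*g' + 9*2^n*ε) := by ring
          _ < (n*ε)*(2*q) := hmul
      have c4 : 2*(q*(n:ℝ))*ε = (n*ε)*(2*q) := by ring
      linarith [c1, c2, c3, c4]
    have hD2n : (0:ℝ) < (D^2)^n := by positivity
    have hM1eq : M1 = D^2 * (1 + (2*ε+ε^2)*g') := by
      rw [hM1, hGg]; ring
    have step : M1^n < (D^2)^n * (1+ε)^(2*(n-i)) := by
      rw [hM1eq, mul_pow]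
      apply mul_lt_mul_of_pos_left _ hD2n
      calc (1 + (2*ε+ε^2)*g')^n ≤ 1 + n*((2*ε+ε^2)*g') + n*2^n*((2*ε+ε^2)*g')^2 := hpow
        _ < 1 + 2*(q*n)*ε := hcore
        _ ≤ (1+ε)^(2*(n-i)) := hbern
    calc M1^n < (D^2)^n * (1+ε)^(2*(n-i)) := step
      _ = ((1+ε)^(n-i) * D^n)^2 := by ring
  -- the bound for M2
  have hN2 : M2^n < ((1+ε)^(n-i) * D^n)^2 := by
    have h1r : (1+ε)*r < D := by
      have hεD : ε * (2*D) ≤ D - r := by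
        rwa [le_div_iff₀ (by linarith : (0:ℝ) < 2*D)] at hεb
      have hεr : ε*r ≤ ε*D := mul_le_mul_of_nonneg_left (le_of_lt hrD) (le_of_lt hε0)
      nlinarith only [hεD, hεr, hrD, hD0]
    have h1 : M2^n < (D^2)^n := by
      rw [hM2]
      have : (((1+ε)*r)^2)^n < (D^2)^n := by
        apply pow_lt_pow_left₀ _ (by positivity) (by omega)
        exact pow_lt_pow_left₀ h1r (by positivity) (by norm_num)
      exact this
    have h2 : (D^2)^n ≤ ((1+ε)^(n-i) * D^n)^2 := by
      have hge : (1:ℝ) ≤ (1+ε)^(n-i) := one_le_pow₀ (by linarith : (1:ℝ) ≤ 1 + ε)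
      calc (D^2)^n = (D^n)^2 := by ring
        _ ≤ ((1+ε)^(n-i))^2 * (D^n)^2 := by
              have hge2 : (1:ℝ) ≤ ((1+ε)^(n-i))^2 := by nlinarith only [hge]
              exact le_mul_of_one_le_left (by positivity) hge2
        _ = ((1+ε)^(n-i) * D^n)^2 := by ring
    linarith
  -- distance bound on the perturbed body
  have hcontr : ∀ v : EuclideanSpace ℝ (Fin n), ‖projO L v‖^2 ≤ ‖v‖^2 := by
    intro v
    have hh := norm_proj_sq_add L v
    linarith only [hh, sq_nonneg ‖(Submodule.orthogonalProjectionOnto L v : EuclideanSpace ℝ (Fin n))‖]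
  have hdb : ∀ x ∈ K, ∀ y ∈ K, (dist (pert L ε x) (pert L ε y))^2 ≤ max M1 M2 := by
    intro x hx y hy
    have hde : dist (pert L ε x) (pert L ε y) = ‖pert L ε (x - y)‖ := by
      rw [dist_eq_norm, ← map_sub]
    rw [hde, norm_pert_sq]
    have hxyD : ‖x - y‖ ≤ D := by
      rw [← dist_eq_norm]
      exact Metric.dist_le_diam_of_mem hKc.isBounded hx hy
    rcases hcase x hx y hy with hc1 | hc2
    · apply le_max_of_le_left
      rw [hM1]
      have h1 : ‖x - y‖^2 ≤ D^2 := pow_le_pow_left₀ (norm_nonneg _) hxyD 2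
      have h2 : (2*ε+ε^2) * ‖projO L (x-y)‖^2 ≤ (2*ε+ε^2) * G :=
        mul_le_mul_of_nonneg_left hc1 (by positivity)
      linarith only [h1, h2]
    · apply le_max_of_le_right
      rw [hM2]
      have h1 : ‖x - y‖ ≤ r := by rw [← dist_eq_norm]; exact hc2
      have h2 : ‖projO L (x-y)‖^2 ≤ ‖x-y‖^2 := hcontr _
      have h3 : ‖x - y‖^2 ≤ r^2 := pow_le_pow_left₀ (norm_nonneg _) h1 2
      have h4 : ‖projO L (x-y)‖^2 ≤ r^2 := le_trans h2 h3
      have h5 : (2*ε+ε^2) * ‖projO L (x-y)‖^2 ≤ (2*ε+ε^2) * r^2 :=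
        mul_le_mul_of_nonneg_left h4 (by positivity)
      nlinarith only [h3, h5]
  -- construct the linear equivalence
  have hdetpos : (0:ℝ) < (1+ε)^(n-i) := by positivity
  have hdet : LinearMap.det (pert L ε) = (1+ε)^(n-i) := det_pert L hL ε
  have hdetne : LinearMap.det (pert L ε) ≠ 0 := by rw [hdet]; positivity
  set e := (pert L ε).equivOfDetNeZero hdetne with he
  have himg : ⇑e '' K = ⇑(pert L ε) '' K := rfl
  -- diameter of the image
  set DE := Metric.diam (⇑(pert L ε) '' K) with hDE
  have hDEnn : 0 ≤ DE := Metric.diam_nonneg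
  have hKe : IsCompact (⇑(pert L ε) '' K) :=
    hKc.image (pert L ε).continuous_of_finiteDimensional
  have hDEub : DE ≤ Real.sqrt (max M1 M2) := by
    apply Metric.diam_le_of_forall_dist_le (Real.sqrt_nonneg _)
    rintro a ⟨x, hx, rfl⟩ b ⟨y, hy, rfl⟩
    rw [show Real.sqrt (max M1 M2) = Real.sqrt (max M1 M2) from rfl]
    have := hdb x hx y hy
    rw [← Real.sqrt_sq dist_nonneg]
    exact Real.sqrt_le_sqrt this
  have hDEsq : DE^2 ≤ max M1 M2 := by
    have h1 : DE^2 ≤ (Real.sqrt (max M1 M2))^2 := by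
      apply pow_le_pow_left₀ hDEnn hDEub
    rwa [Real.sq_sqrt (le_max_of_le_left hM1nn)] at h1
  have hDEpos : 0 < DE := by
    have hne : pert L ε x₀ ≠ pert L ε y₀ := by
      intro hcontra
      have hinj : Function.Injective (pert L ε) := by
        rw [show ⇑(pert L ε) = ⇑e from rfl]
        exact e.injective
      have : x₀ = y₀ := hinj hcontra
      rw [this] at hd₀
      simp at hd₀
      linarith
    have h1 : 0 < dist (pert L ε x₀) (pert L ε y₀) := dist_pos.2 hne
    have h2 : dist (pert L ε x₀) (pert L ε y₀) ≤ DE :=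
      Metric.dist_le_diam_of_mem hKe.isBounded
        (Set.mem_image_of_mem _ hx₀) (Set.mem_image_of_mem _ hy₀)
    linarith
  -- key: DE^n < det * D^n
  have hDn : DE^n < (1+ε)^(n-i) * D^n := by
    have hsq2 : (DE^n)^2 < ((1+ε)^(n-i) * D^n)^2 := by
      have h1 : (DE^n)^2 = (DE^2)^n := by ring
      rw [h1]
      have h2 : (DE^2)^n ≤ (max M1 M2)^n := by
        apply pow_le_pow_left₀ (by positivity) hDEsq
      have h3 : (max M1 M2)^n < ((1+ε)^(n-i) * D^n)^2 := by
        rcases max_cases M1 M2 with ⟨hm, _⟩ | ⟨hm, _⟩ <;> rw [hm]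
        · exact hN1
        · exact hN2
      linarith
    nlinarith only [hsq2, pow_nonneg hDEnn n,
      mul_nonneg (le_of_lt hdetpos) (pow_nonneg (le_of_lt hD0) n)]
  -- volume of image
  have hV0 : 0 < (volume K).toReal := by
    apply ENNReal.toReal_pos
    · exact (MeasureTheory.Measure.measure_pos_of_nonempty_interior (μ := volume) ⟨z, hzint⟩).ne'
    · exact hKc.measure_lt_top.ne
  have hvol : (volume (⇑(pert L ε) '' K)).toReal = (1+ε)^(n-i) * (volume K).toReal := by
    rw [MeasureTheory.Measure.addHaar_image_linearMap volume (pert L ε) K]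
    rw [ENNReal.toReal_mul, ENNReal.toReal_ofReal (abs_nonneg _)]
    rw [hdet, abs_of_pos hdetpos]
  -- final contradiction
  have hiqK : iq K = (volume K).toReal / D^n := rfl
  have hiqE : iq (⇑e '' K) = (1+ε)^(n-i) * (volume K).toReal / DE^n := by
    rw [iq, himg, hvol, hDE]
  have hgt : iq K < iq (⇑e '' K) := by
    rw [hiqK, hiqE]
    have hDEn : 0 < DE^n := by positivity
    have hdetDn : 0 < (1+ε)^(n-i) * D^n := by positivity
    have h1 : (1+ε)^(n-i) * (volume K).toReal / ((1+ε)^(n-i) * D^n)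
        < (1+ε)^(n-i) * (volume K).toReal / DE^n :=
      div_lt_div_of_pos_left (by positivity) hDEn hDn
    have h2 : (1+ε)^(n-i) * (volume K).toReal / ((1+ε)^(n-i) * D^n)
        = (volume K).toReal / D^n := by
      rw [mul_div_mul_left _ _ (ne_of_gt hdetpos)]
    linarith
  exact absurd (hB e) (not_le.2 hgt)
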